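/- The Haar diagonal matrix element of the free-particle propagator has the closed form [σ₀ⁿ]₀₀ = 2 Σ_{k=0}^{∞} J_{2k}(0, a) = −i √(2/π) · F₁(e^{iπ/4}/√(2a)), where a > 0 and F₁(x) = Σ_{k=0}^{∞} x^{2k+1}/((2k+1)(2k+2)!!). -/

import Mathlib

open MeasureTheory Real Complex Nat

/-- The contour power integral `J_m(l,a)`. -/
noncomputable def J (m : ℕ) (l a : ℝ) : ℂ :=
  (Complex.exp (Complex.I * Real.pi * ((m:ℂ) - 1) / 4) / (2 * Real.pi * ((m+2).factorial : ℝ))) *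
    ∫ ρ : ℝ, Complex.exp ((ρ:ℂ) * l * Complex.exp (Complex.I * Real.pi / 4) - a * ρ^2) * (ρ:ℂ)^m

/-- The auxiliary power series `F₁(x) = Σ x^(2k+1)/((2k+1)(2k+2)‼)`. -/
noncomputable def F1 (x : ℂ) : ℂ :=
  ∑' k : ℕ, x^(2*k+1) / ((2*(k:ℂ)+1) * (((2*k+2)‼ : ℕ) : ℂ))

section
open Set

lemma Gamma_half (k : ℕ) : Real.Gamma ((k:ℝ) + 1/2) = Real.sqrt π * (2*k)! / (4^k * k !) := by
  induction k with
  | zero => simpa using Real.Gamma_one_half_eq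
  | succ n ih =>
    have h : ((n+1:ℕ):ℝ) + 1/2 = ((n:ℝ) + 1/2) + 1 := by push_cast; ring
    rw [h, Real.Gamma_add_one (by positivity : (0:ℝ) < (n:ℝ)+1/2).ne', ih]
    have hf : ((2*(n+1))! : ℝ) = (2*(n:ℝ)+2) * ((2*n+1) * (2*n)!) := by
      have h2 : 2*(n+1) = 2*n+1+1 := by ring
      rw [h2, Nat.factorial_succ, Nat.factorial_succ]; push_cast; ring
    have hg : (((n+1))! : ℝ) = ((n:ℝ)+1) * n ! := by
      rw [Nat.factorial_succ]; push_cast; ring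
    rw [hf, hg]
    have h4 : (4:ℝ)^n ≠ 0 := by positivity
    have hn : (n ! : ℝ) ≠ 0 := by exact_mod_cast (Nat.factorial_pos n).ne'
    field_simp
    ring

lemma moment (a : ℝ) (ha : 0 < a) (k : ℕ) :
    ∫ x : ℝ, x ^ (2*k) * Real.exp (-(a * x^2))
      = Real.sqrt π * (2*k)! / (Real.sqrt a * (4*a)^k * k !) := by
  have hq : (-1:ℝ) < ((2*k:ℕ):ℝ) := lt_of_lt_of_le neg_one_lt_zero (Nat.cast_nonneg _)
  have hint : Integrable fun x : ℝ => x ^ (2*k) * Real.exp (-(a*x^2)) := by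
    have := integrable_rpow_mul_exp_neg_mul_sq ha hq
    simp only [Real.rpow_natCast, neg_mul] at this
    exact this
  have heven : ∀ x : ℝ, (-x) ^ (2*k) * Real.exp (-(a*(-x)^2))
      = x ^ (2*k) * Real.exp (-(a*x^2)) := by
    intro x; rw [pow_mul, pow_mul, neg_sq]
  have hsplit := intervalIntegral.integral_Iic_add_Ioi (b := (0:ℝ)) hint.integrableOn hint.integrableOn
  have h1 : (∫ x in Iic (0:ℝ), x ^ (2*k) * Real.exp (-(a*x^2)))
      = ∫ x in Ioi (0:ℝ), x ^ (2*k) * Real.exp (-(a*x^2)) := by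
    have h0 := integral_comp_neg_Iic (0:ℝ)
      (fun x => x ^ (2*k) * Real.exp (-(a*x^2)))
    simp only [heven, neg_zero] at h0
    exact h0
  have h2 : (∫ x in Ioi (0:ℝ), x ^ (2*k) * Real.exp (-(a*x^2)))
      = a ^ (-(((2*k:ℕ):ℝ) + 1)/2) * (1/2) * Real.Gamma ((((2*k:ℕ):ℝ) + 1)/2) := by
    rw [← integral_rpow_mul_exp_neg_mul_rpow two_pos hq ha]
    refine setIntegral_congr_fun measurableSet_Ioi (fun x hx => ?_)
    rw [Real.rpow_natCast, Real.rpow_two]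
    ring_nf
  have hG : ((((2*k:ℕ):ℝ) + 1)/2) = (k:ℝ) + 1/2 := by push_cast; ring
  have hrpow : a ^ (-(((2*k:ℕ):ℝ) + 1)/2) = 1 / (Real.sqrt a * a ^ k) := by
    rw [show (-(((2*k:ℕ):ℝ) + 1)/2) = -((k:ℝ) + 1/2) by push_cast; ring,
      Real.rpow_neg ha.le, Real.rpow_add ha, Real.rpow_natCast,
      ← Real.sqrt_eq_rpow]
    rw [one_div, mul_comm]
  rw [← hsplit, h1, h2, hG, hrpow, Gamma_half]
  have h4 : (4:ℝ)^k ≠ 0 := by positivity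
  have hak : a^k ≠ 0 := by positivity
  have hsa : Real.sqrt a ≠ 0 := by positivity
  have hn : (k ! : ℝ) ≠ 0 := by exact_mod_cast (Nat.factorial_pos k).ne'
  rw [mul_pow]
  field_simp
  ring

end

lemma exp_neg_pi_div_two_mul_I : Complex.exp (-(↑π/2) * Complex.I) = -Complex.I := by
  rw [Complex.exp_mul_I]
  simp [← Complex.ofReal_div, ← Complex.ofReal_neg, ← Complex.ofReal_cos, ← Complex.ofReal_sin]

lemma natfac (k : ℕ) : (2*k+2)! * (2^k * k !) = (2*k+2)‼ * ((2*k+1) * (2*k)!) := by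
  have h1 : (2*k+2)! = (2*k+2)‼ * (2*k+1)‼ := by
    have := Nat.factorial_eq_mul_doubleFactorial (2*k+1)
    simpa [show 2*k+1+1 = 2*k+2 by ring] using this
  have h2 : (2*k+1)! = (2*k+1)‼ * (2*k)‼ := Nat.factorial_eq_mul_doubleFactorial (2*k)
  have h3 : (2*k)‼ = 2^k * k ! := Nat.doubleFactorial_two_mul k
  have h4 : (2*k+1)! = (2*k+1) * (2*k)! := Nat.factorial_succ (2*k)
  calc (2*k+2)! * (2^k * k !) = (2*k+2)‼ * ((2*k+1)‼ * (2*k)‼) := by rw [h1, h3]; ring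
  _ = (2*k+2)‼ * ((2*k+1) * (2*k)!) := by rw [← h2, h4]

lemma term_eq (a : ℝ) (ha : 0 < a) (k : ℕ) :
    2 * J (2*k) 0 a
      = -Complex.I * (Real.sqrt (2/π) : ℂ) *
        ((Complex.exp (Complex.I * ↑π / 4) / (Real.sqrt (2*a) : ℂ))^(2*k+1) /
          ((2*(k:ℂ)+1) * (((2*k+2)‼ : ℕ) : ℂ))) := by
  have hintg : (∫ ρ : ℝ, Complex.exp ((ρ:ℂ) * (0:ℝ) * Complex.exp (Complex.I * ↑π / 4)
        - ↑a * (ρ:ℂ)^2) * (ρ:ℂ)^(2*k))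
      = ((Real.sqrt π * (2*k)! / (Real.sqrt a * (4*a)^k * k !) : ℝ) : ℂ) := by
    have hco : (∫ ρ : ℝ, (((ρ:ℝ)^(2*k) * Real.exp (-(a*ρ^2)) : ℝ) : ℂ))
        = ((∫ x : ℝ, x^(2*k) * Real.exp (-(a*x^2)) : ℝ) : ℂ) := integral_ofReal
    rw [← moment a ha k, ← hco]
    refine integral_congr_ae (Filter.Eventually.of_forall fun ρ => ?_)
    push_cast
    rw [mul_zero, zero_mul, zero_sub, ← Complex.ofReal_pow, ← Complex.ofReal_mul,
      ← Complex.ofReal_neg, ← Complex.ofReal_exp]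
    push_cast
    ring
  have hexp : Complex.exp (Complex.I * ↑π * (((2*k:ℕ):ℂ) - 1) / 4)
      = Complex.exp (Complex.I * ↑π / 4) ^ (2*k+1) * (-Complex.I) := by
    rw [show Complex.I * ↑π * (((2*k:ℕ):ℂ) - 1) / 4
        = ((2*k+1:ℕ):ℂ) * (Complex.I * ↑π / 4) + (-(↑π/2) * Complex.I) by push_cast; ring,
      Complex.exp_add, Complex.exp_nat_mul, _root_.exp_neg_pi_div_two_mul_I]
  rw [J, hintg, hexp]
  -- algebra
  have hs2a : (Real.sqrt (2*a) : ℝ) = Real.sqrt 2 * Real.sqrt a := Real.sqrt_mul (by norm_num) a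
  have hs2pi : (Real.sqrt (2/π) : ℝ) = Real.sqrt 2 / Real.sqrt π := Real.sqrt_div' 2 pi_pos.le
  have hpi0 : Real.sqrt π ≠ 0 := by positivity
  have hpic : (π:ℂ) = ((Real.sqrt π : ℝ):ℂ)^2 := by
    rw [← Complex.ofReal_pow, Real.sq_sqrt pi_pos.le]
  have he2a : ((Real.sqrt (2*a) : ℝ):ℂ)^(2*k+1)
      = ((2*a:ℝ):ℂ)^k * ((Real.sqrt 2 * Real.sqrt a : ℝ):ℂ) := by
    rw [pow_succ, pow_mul, ← Complex.ofReal_pow, Real.sq_sqrt (by positivity : (0:ℝ) ≤ 2*a), hs2a]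
  rw [div_pow, he2a, hs2pi]
  have hfac : (((2*k+2)‼ : ℕ) : ℂ)
      = ((2*k+2)! : ℕ) * ((2:ℂ)^k * (k ! : ℕ)) / ((2*(k:ℂ)+1) * (((2*k)! : ℕ):ℂ)) := by
    rw [eq_div_iff (by
      refine mul_ne_zero ?_ (Nat.cast_ne_zero.mpr (Nat.factorial_pos _).ne')
      have : ((2*k+1:ℕ):ℂ) ≠ 0 := Nat.cast_ne_zero.mpr (by omega)
      push_cast at this; exact_mod_cast this)]
    have := natfac k
    have hc : (((2*k+2)! * (2^k * k !) : ℕ) : ℂ) = (((2*k+2)‼ * ((2*k+1) * (2*k)!) : ℕ) : ℂ) := by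
      exact_mod_cast congrArg (Nat.cast : ℕ → ℂ) this
    push_cast at hc ⊢
    linear_combination -hc
  rw [hfac, show ((4:ℝ)*a) = 2*(2*a) by ring, mul_pow]
  push_cast
  set E := Complex.exp (Complex.I * (π:ℂ) / 4) with hE
  rw [hpic]
  have h1 : ((Real.sqrt a : ℝ):ℂ) ≠ 0 := Complex.ofReal_ne_zero.mpr (by positivity)
  have h2 : ((Real.sqrt π : ℝ):ℂ) ≠ 0 := Complex.ofReal_ne_zero.mpr hpi0
  have h3 : ((Real.sqrt 2 : ℝ):ℂ) ≠ 0 := Complex.ofReal_ne_zero.mpr (by positivity)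
  have h4 : ((k ! : ℕ):ℂ) ≠ 0 := Nat.cast_ne_zero.mpr (Nat.factorial_pos _).ne'
  have h5 : (((2*k)! : ℕ):ℂ) ≠ 0 := Nat.cast_ne_zero.mpr (Nat.factorial_pos _).ne'
  have h6 : (((2*k+2)! : ℕ):ℂ) ≠ 0 := Nat.cast_ne_zero.mpr (Nat.factorial_pos _).ne'
  have h7 : (2*(k:ℂ)+1) ≠ 0 := by
    have : ((2*k+1:ℕ):ℂ) ≠ 0 := Nat.cast_ne_zero.mpr (by omega)
    push_cast at this; exact_mod_cast this
  have h8 : (a:ℂ) ≠ 0 := Complex.ofReal_ne_zero.mpr ha.ne'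
  generalize hg : (2*(k:ℂ)+1 : ℂ) = K at h7 ⊢
  have hP : (2*(a:ℂ))^k ≠ 0 := pow_ne_zero _ (mul_ne_zero two_ne_zero h8)
  have hQ : ((2:ℂ))^k ≠ 0 := pow_ne_zero _ two_ne_zero
  generalize hgp : (2*(a:ℂ))^k = P at hP ⊢
  generalize hgq : ((2:ℂ))^k = Q at hQ ⊢
  have hEk : Complex.exp (Complex.I * (↑(Real.sqrt π):ℂ)^2 / 4) ^ (2*k+1) ≠ 0 := pow_ne_zero _ (Complex.exp_ne_zero _)
  field_simp

theorem haar_diagonal_closed_form (a : ℝ) (ha : 0 < a) :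
    2 * ∑' k : ℕ, J (2*k) 0 a
      = -Complex.I * (Real.sqrt (2 / Real.pi) : ℂ) *
          F1 (Complex.exp (Complex.I * Real.pi / 4) / (Real.sqrt (2*a) : ℂ)) := by
  rw [F1, ← tsum_mul_left, ← tsum_mul_left]
  exact tsum_congr fun k => term_eq a ha k
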